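/- Let F, h : ℂ^n → ℂ be polynomials in z, z̄ (formal statement for Taylor series of smooth germs) with h(0) ≠ 0 and F(0) = 0. Then the Newton polyhedra agree: N₊(hF) = N₊(F), where N₊(G) = conv(⋃_{ξ ∈ S(G)}(ξ + ℝ≥0^n)) and S(G) is the set of exponents α+β with nonzero coefficient in G. -/

import Mathlib

/-- The Newton polyhedron of a polynomial in `z` and `z̄`, represented as a polynomial in
`2n` variables (the first `n` for `z`, the last `n` for `z̄`): the convex hull of the union
of the sets `(α + β) + ℝ≥0ⁿ` over the exponents `(α, β)` in the support. -/
def NewtonPolyhedron (n : ℕ) (G : MvPolynomial (Fin n ⊕ Fin n) ℂ) : Set (Fin n → ℝ) :=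
  convexHull ℝ {ξ : Fin n → ℝ | ∃ d ∈ G.support,
    ∀ i, ((d (Sum.inl i) + d (Sum.inr i) : ℕ) : ℝ) ≤ ξ i}

theorem stmt_18 (n : ℕ) (h F : MvPolynomial (Fin n ⊕ Fin n) ℂ)
    (hh : MvPolynomial.coeff 0 h ≠ 0) (hF : MvPolynomial.coeff 0 F = 0) :
    NewtonPolyhedron n (h * F) = NewtonPolyhedron n F := by
  unfold NewtonPolyhedron
  congr 1
  ext ξ
  simp only [Set.mem_setOf_eq]
  constructor
  · rintro ⟨d, hd, hle⟩
    obtain ⟨d1, h1, d2, h2, rfl⟩ := Finset.mem_add.mp (MvPolynomial.support_mul h F hd)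
    refine ⟨d2, h2, fun i => le_trans ?_ (hle i)⟩
    have : d2 (Sum.inl i) + d2 (Sum.inr i) ≤
        (d1 + d2) (Sum.inl i) + (d1 + d2) (Sum.inr i) := by
      simp [Finsupp.add_apply]; omega
    exact_mod_cast this
  · rintro ⟨d, hd, hle⟩
    set T : Finset ((Fin n ⊕ Fin n) →₀ ℕ) := F.support.filter
      (fun e => ∀ i, e (Sum.inl i) + e (Sum.inr i) ≤ d (Sum.inl i) + d (Sum.inr i)) with hT
    have hdT : d ∈ T := by simp [hT, hd]
    obtain ⟨e, heT, hmin⟩ : ∃ e ∈ T, ∀ x ∈ T, ¬x < e := by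
      obtain ⟨e, he⟩ := Finset.exists_minimal (⟨d, hdT⟩ : T.Nonempty)
      exact ⟨e, he.1, fun x hx hlt => hlt.not_ge (he.2 hx hlt.le)⟩
    have heF : e ∈ F.support := (Finset.mem_filter.mp heT).1
    have hesum : ∀ i, e (Sum.inl i) + e (Sum.inr i) ≤ d (Sum.inl i) + d (Sum.inr i) :=
      (Finset.mem_filter.mp heT).2
    refine ⟨e, ?_, fun i => le_trans (by exact_mod_cast hesum i) (hle i)⟩
    rw [MvPolynomial.mem_support_iff, MvPolynomial.coeff_mul]
    have hmem : ((0 : (Fin n ⊕ Fin n) →₀ ℕ), e) ∈ Finset.HasAntidiagonal.antidiagonal e := by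
      simp [Finset.mem_antidiagonal]
    rw [Finset.sum_eq_single_of_mem _ hmem]
    · exact mul_ne_zero hh (MvPolynomial.mem_support_iff.mp heF)
    · rintro ⟨a, b⟩ hab hne
      rw [Finset.HasAntidiagonal.mem_antidiagonal] at hab
      have ha : a ≠ 0 := by
        rintro rfl
        simp_all
      have hblt : b < e := by
        refine lt_of_le_of_ne ?_ ?_
        · rw [← hab]; exact le_add_self
        · rintro rfl
          exact ha (by simpa using hab)
      have hbF : MvPolynomial.coeff b F = 0 := by
        by_contra hb
        have hbT : b ∈ T := by
          refine Finset.mem_filter.mpr ⟨MvPolynomial.mem_support_iff.mpr hb, fun i => ?_⟩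
          have h1 : b (Sum.inl i) ≤ e (Sum.inl i) := hblt.le (Sum.inl i)
          have h2 : b (Sum.inr i) ≤ e (Sum.inr i) := hblt.le (Sum.inr i)
          have := hesum i
          omega
        exact hmin b hbT hblt
      simp [hbF]
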